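/- Let G be a directed graph that is a local optimum of edge-flip local search (no directed edge (u,v) with disc(v) > disc(u)+2). Let v be a vertex of maximum discrepancy k ≥ 0, and let L_i be the set of vertices whose shortest path to v following reverse edge directions has exactly i edges. Then every vertex in L_i has discrepancy at least k − 2i. -/
import Mathlib


open Finset

def inDeg {V : Type*} [DecidableEq V] (D : Finset (V × V)) (v : V) : ℕ :=
  (D.filter (fun e => e.2 = v)).card

def outDeg {V : Type*} [DecidableEq V] (D : Finset (V × V)) (v : V) : ℕ :=
  (D.filter (fun e => e.1 = v)).card

def disc {V : Type*} [DecidableEq V] (D : Finset (V × V)) (v : V) : ℤ :=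
  (inDeg D v : ℤ) - (outDeg D v : ℤ)

/-- Vertices reachable from `v` in at most `i` steps following edges backwards
(i.e., along incoming edges). -/
def reach {V : Type*} (D : Finset (V × V)) (v : V) : ℕ → Set V
  | 0 => {v}
  | (i + 1) => reach D v i ∪ {w | ∃ u ∈ reach D v i, (w, u) ∈ D}

/-- BFS layers from `v` following incoming edges: `layers D v i` is the set of vertices
whose shortest path to `v` (following reverse edge directions) has exactly `i` edges. -/
def layers {V : Type*} (D : Finset (V × V)) (v : V) : ℕ → Set V
  | 0 => {v}
  | (i + 1) => {w | w ∉ reach D v i ∧ ∃ u ∈ layers D v i, (w, u) ∈ D}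

/-- **Discrepancy decreases by at most 2 per BFS layer at a local optimum.**
If no directed edge `(u,w)` has `disc w > disc u + 2`, `v` has maximum discrepancy
`k = disc v ≥ 0`, then every vertex in layer `i` has discrepancy at least `k - 2i`. -/
theorem stmt2 (V : Type*) [Fintype V] [DecidableEq V] (D : Finset (V × V)) (v : V)
    (hopt : ∀ e ∈ D, disc D e.2 ≤ disc D e.1 + 2)
    (hmax : ∀ w : V, disc D w ≤ disc D v)
    (hk : 0 ≤ disc D v) :
    ∀ i : ℕ, ∀ w ∈ layers D v i, disc D v - 2 * (i : ℤ) ≤ disc D w := by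
  intro i
  induction i with
  | zero => intro w hw; simp [layers] at hw; simp [hw]
  | succ n ih =>
      intro w hw
      obtain ⟨-, u, hu, hwu⟩ := hw
      have h1 := ih u hu
      have h2 := hopt (w, u) hwu
      push_cast
      simp only at h2
      linarith
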